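/- Fix an integer n ≥ 1. (i) Let c, d, c′, d′ ∈ A have degree < n−1 and let h, h′ be standard lifts for (c,d), (c′,d′) of level tⁿ. Then there exist γ ∈ Γ₁(tⁿ) and λ ∈ K^× with γ·h·(1,0)ᵀ = λ·h′·(1,0)ᵀ if and only if c = c′ and d′ − d ≡ c·e (mod t^{n−1}) for some e ∈ A. (ii) Every nonzero vector v ∈ K² for which there exist δ ∈ Γ₁(t) and μ ∈ K^× with δv = μ·(1,0)ᵀ satisfies: there exist c, d ∈ A of degree < n−1, a standard lift h for (c,d), γ ∈ Γ₁(tⁿ) and λ ∈ K^× with γv = λ·h·(1,0)ᵀ. Thus the cusps h_{(c,d)}(∞), taken over representatives of the relation (c,d) ∼ (c′,d′) ⇔ c = c′ and d′−d ∈ c·(A/(t^{n−1})), form a complete set of representatives of the cusps of Γ₁(tⁿ) lying over ∞. -/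

import Mathlib

open Polynomial Matrix

/-- `Γ₁(𝔫)` as a set of 2×2 matrices over `A = F[t]`:
matrices of determinant 1 congruent to `[[1,*],[0,1]]` mod `𝔫`. -/
def Gamma1 (F : Type*) [Field F] (n : Polynomial F) :
    Set (Matrix (Fin 2) (Fin 2) (Polynomial F)) :=
  {γ | γ.det = 1 ∧ n ∣ γ 1 0 ∧ n ∣ (γ 0 0 - 1) ∧ n ∣ (γ 1 1 - 1)}

/-- A standard lift `h = h_{(c,d)}` of level `tⁿ`: an element of `SL₂(A)` with
`h₁₂ ≡ 0`, `h₂₁ ≡ tc`, `h₂₂ ≡ 1 + td` and `h₁₁(1+td) ≡ 1 (mod tⁿ)`. -/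
def IsStdLift (F : Type*) [Field F] (n : ℕ) (c d : Polynomial F)
    (h : Matrix (Fin 2) (Fin 2) (Polynomial F)) : Prop :=
  h.det = 1 ∧ (X : Polynomial F) ^ n ∣ h 0 1 ∧
    (X : Polynomial F) ^ n ∣ (h 1 0 - X * c) ∧
    (X : Polynomial F) ^ n ∣ (h 1 1 - (1 + X * d)) ∧
    (X : Polynomial F) ^ n ∣ (h 0 0 * (1 + X * d) - 1)

section Helpers

variable {F : Type*} [Field F]

private lemma mulVec_two {R : Type*} [CommRing R] (M : Matrix (Fin 2) (Fin 2) R)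
    (v : Fin 2 → R) :
    M.mulVec v = ![M 0 0 * v 0 + M 0 1 * v 1, M 1 0 * v 0 + M 1 1 * v 1] := by
  funext i
  fin_cases i <;> simp [Matrix.mulVec, dotProduct, Fin.sum_univ_two]

private lemma map_mulVec10 {F : Type*} [Field F] (φ : Polynomial F →+* RatFunc F)
    (M : Matrix (Fin 2) (Fin 2) (Polynomial F)) :
    (M.map φ).mulVec ![1, 0] = ![φ (M 0 0), φ (M 1 0)] := by
  rw [mulVec_two]
  simp [Matrix.map_apply]

end Helpers

set_option synthInstance.maxHeartbeats 1000000 in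

set_option maxHeartbeats 2000000 in
theorem stmt6 (p : ℕ) (hp : p.Prime) (F : Type*) [Field F] [Fintype F] [CharP F p]
    (n : ℕ) (hn : 1 ≤ n) :
    (∀ c d c' d' : Polynomial F, ∀ h h' : Matrix (Fin 2) (Fin 2) (Polynomial F),
      c.degree < ((n - 1 : ℕ) : WithBot ℕ) → d.degree < ((n - 1 : ℕ) : WithBot ℕ) →
      c'.degree < ((n - 1 : ℕ) : WithBot ℕ) → d'.degree < ((n - 1 : ℕ) : WithBot ℕ) →
      IsStdLift F n c d h → IsStdLift F n c' d' h' →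
      ((∃ γ ∈ Gamma1 F ((X : Polynomial F) ^ n), ∃ l : RatFunc F, l ≠ 0 ∧
          (γ.map (algebraMap (Polynomial F) (RatFunc F))).mulVec
            ((h.map (algebraMap (Polynomial F) (RatFunc F))).mulVec
              (![1, 0] : Fin 2 → RatFunc F)) =
          l • ((h'.map (algebraMap (Polynomial F) (RatFunc F))).mulVec
              (![1, 0] : Fin 2 → RatFunc F))) ↔
        (c = c' ∧ ∃ e : Polynomial F, (X : Polynomial F) ^ (n - 1) ∣ (d' - d - c * e)))) ∧
    (∀ v : Fin 2 → RatFunc F, v ≠ 0 →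
      (∃ δ ∈ Gamma1 F (X : Polynomial F), ∃ m : RatFunc F, m ≠ 0 ∧
        (δ.map (algebraMap (Polynomial F) (RatFunc F))).mulVec v = ![m, 0]) →
      ∃ c d : Polynomial F, c.degree < ((n - 1 : ℕ) : WithBot ℕ) ∧
        d.degree < ((n - 1 : ℕ) : WithBot ℕ) ∧
        ∃ h : Matrix (Fin 2) (Fin 2) (Polynomial F), IsStdLift F n c d h ∧
          ∃ γ ∈ Gamma1 F ((X : Polynomial F) ^ n), ∃ l : RatFunc F, l ≠ 0 ∧
            (γ.map (algebraMap (Polynomial F) (RatFunc F))).mulVec v =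
              l • ((h.map (algebraMap (Polynomial F) (RatFunc F))).mulVec
                (![1, 0] : Fin 2 → RatFunc F))) := by
  constructor
  · intro c d c' d' h h' hcdeg hddeg hc'deg hd'deg hs hs'
    constructor
    · rintro ⟨γ, hγmem, l, hl, hEq⟩
      set φ := algebraMap (Polynomial F) (RatFunc F) with hφ
      have hinj : Function.Injective φ := RatFunc.algebraMap_injective F
      obtain ⟨hdet, hb, hc10, hd11, ha⟩ := hs
      obtain ⟨hdet', hb', hc10', hd11', ha'⟩ := hs'
      obtain ⟨hγdet, hγ10, hγ00, hγ11⟩ := hγmem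
      have hn0 : n ≠ 0 := Nat.one_le_iff_ne_zero.1 hn
      have hpow : (X : Polynomial F) ^ n = X * X ^ (n - 1) := by
        nth_rewrite 1 [← Nat.sub_add_cancel hn]
        rw [pow_succ']
      have hdet2 : h 0 0 * h 1 1 - h 0 1 * h 1 0 = 1 := by rw [← Matrix.det_fin_two]; exact hdet
      have hdet2' : h' 0 0 * h' 1 1 - h' 0 1 * h' 1 0 = 1 := by rw [← Matrix.det_fin_two]; exact hdet'
      have hγdet2 : γ 0 0 * γ 1 1 - γ 0 1 * γ 1 0 = 1 := by rw [← Matrix.det_fin_two]; exact hγdet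
      -- extract the two coordinate equations
      have h1 : (γ.map φ).mulVec ((h.map φ).mulVec ![1, 0]) = ((γ * h).map φ).mulVec ![1, 0] := by
        rw [Matrix.mulVec_mulVec, ← Matrix.map_mul]
      rw [h1, map_mulVec10, map_mulVec10] at hEq
      have e0 : φ ((γ * h) 0 0) = l * φ (h' 0 0) := by simpa using congrFun hEq 0
      have e1 : φ ((γ * h) 1 0) = l * φ (h' 1 0) := by simpa using congrFun hEq 1
      have hP0 : (γ * h) 0 0 = γ 0 0 * h 0 0 + γ 0 1 * h 1 0 := by
        rw [Matrix.mul_apply, Fin.sum_univ_two]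
      have hP1 : (γ * h) 1 0 = γ 1 0 * h 0 0 + γ 1 1 * h 1 0 := by
        rw [Matrix.mul_apply, Fin.sum_univ_two]
      -- l is a polynomial
      set L : Polynomial F := (γ * h) 0 0 * h' 1 1 - (γ * h) 1 0 * h' 0 1 with hL
      have hlL : l = φ L := by
        have h2 : φ L = l * φ (h' 0 0 * h' 1 1 - h' 0 1 * h' 1 0) := by
          rw [hL]
          simp only [_root_.map_sub, _root_.map_mul, e0, e1]
          ring
        rw [hdet2', _root_.map_one, mul_one] at h2
        exact h2.symm
      -- solve for h-column in terms of h'-column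
      have pid0 : γ 1 1 * ((γ * h) 0 0) - γ 0 1 * ((γ * h) 1 0) = h 0 0 := by
        rw [hP0, hP1]; linear_combination (h 0 0) * hγdet2
      have pid1 : γ 0 0 * ((γ * h) 1 0) - γ 1 0 * ((γ * h) 0 0) = h 1 0 := by
        rw [hP0, hP1]; linear_combination (h 1 0) * hγdet2
      set M0 : Polynomial F := γ 1 1 * h' 0 0 - γ 0 1 * h' 1 0 with hM0
      set M1 : Polynomial F := γ 0 0 * h' 1 0 - γ 1 0 * h' 0 0 with hM1
      have f0 : φ (h 0 0) = l * φ M0 := by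
        rw [← pid0, hM0]
        simp only [_root_.map_sub, _root_.map_mul, e0, e1]
        ring
      have f1 : φ (h 1 0) = l * φ M1 := by
        rw [← pid1, hM1]
        simp only [_root_.map_sub, _root_.map_mul, e0, e1]
        ring
      -- L is a unit
      have hLW : L * (h 1 1 * M0 - h 0 1 * M1) = 1 := by
        apply hinj
        rw [_root_.map_one, _root_.map_mul, ← hlL]
        have hdetRF : φ (h 0 0) * φ (h 1 1) - φ (h 0 1) * φ (h 1 0) = 1 := by
          rw [← _root_.map_mul, ← _root_.map_mul, ← _root_.map_sub, hdet2, _root_.map_one]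
        simp only [_root_.map_sub, _root_.map_mul]
        linear_combination (-(φ (h 1 1))) * f0 + φ (h 0 1) * f1 + hdetRF
      obtain ⟨u, hu, hCu⟩ := Polynomial.isUnit_iff.1 (IsUnit.of_mul_eq_one _ hLW)
      -- lift the two equations to polynomial equations
      have g0 : γ 0 0 * h 0 0 + γ 0 1 * h 1 0 = C u * h' 0 0 := by
        rw [← hP0, hCu]
        apply hinj
        rw [_root_.map_mul, ← hlL]
        exact e0
      have g1 : γ 1 0 * h 0 0 + γ 1 1 * h 1 0 = C u * h' 1 0 := by
        rw [← hP1, hCu]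
        apply hinj
        rw [_root_.map_mul, ← hlL]
        exact e1
      -- quotient ring
      set Q := Ideal.Quotient.mk (Ideal.span {(X : Polynomial F) ^ n}) with hQ
      have toQ : ∀ z w : Polynomial F, (X : Polynomial F) ^ n ∣ (z - w) → Q z = Q w := by
        intro z w hzw
        rw [← sub_eq_zero, ← _root_.map_sub]
        exact (Ideal.Quotient.eq_zero_iff_dvd _ _).2 hzw
      have ofQ : ∀ z : Polynomial F, Q z = 0 → (X : Polynomial F) ^ n ∣ z := fun z hz =>
        (Ideal.Quotient.eq_zero_iff_dvd _ _).1 hz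
      have q_c : Q (h 1 0) = Q X * Q c := by
        have := toQ _ _ hc10; rwa [_root_.map_mul] at this
      have q_c' : Q (h' 1 0) = Q X * Q c' := by
        have := toQ _ _ hc10'; rwa [_root_.map_mul] at this
      have q_d : Q (h 1 1) = 1 + Q X * Q d := by
        have := toQ _ _ hd11; simpa only [_root_.map_add, _root_.map_one, _root_.map_mul] using this
      have q_d' : Q (h' 1 1) = 1 + Q X * Q d' := by
        have := toQ _ _ hd11'; simpa only [_root_.map_add, _root_.map_one, _root_.map_mul] using this
      have q_a : Q (h 0 0) * (1 + Q X * Q d) = 1 := by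
        have := toQ _ _ ha; simpa only [_root_.map_mul, _root_.map_add, _root_.map_one] using this
      have q_a' : Q (h' 0 0) * (1 + Q X * Q d') = 1 := by
        have := toQ _ _ ha'; simpa only [_root_.map_mul, _root_.map_add, _root_.map_one] using this
      have q_γ10 : Q (γ 1 0) = 0 := by
        have := toQ _ 0 (by simpa using hγ10); simpa using this
      have q_γ00 : Q (γ 0 0) = 1 := by
        have := toQ _ 1 (by simpa using hγ00); simpa using this
      have q_γ11 : Q (γ 1 1) = 1 := by
        have := toQ _ 1 (by simpa using hγ11); simpa using this
      have q_row0 : Q (γ 0 0) * Q (h 0 0) + Q (γ 0 1) * Q (h 1 0) = Q (C u) * Q (h' 0 0) := by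
        have := congrArg Q g0
        simpa only [_root_.map_add, _root_.map_mul] using this
      have q_row1 : Q (γ 1 0) * Q (h 0 0) + Q (γ 1 1) * Q (h 1 0) = Q (C u) * Q (h' 1 0) := by
        have := congrArg Q g1
        simpa only [_root_.map_add, _root_.map_mul] using this
      -- the key congruence E
      have hEdvd : (X : Polynomial F) ^ n ∣ ((1 + X * d') + γ 0 1 * X * c * ((1 + X * d) * (1 + X * d'))
          - C u * (1 + X * d)) := by
        apply ofQ
        simp only [_root_.map_sub, _root_.map_add, _root_.map_mul, _root_.map_one]
        rw [sub_eq_zero]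
        linear_combination ((1 + Q X * Q d) * (1 + Q X * Q d')) * q_row0
          - (1 + Q X * Q d') * q_a + (Q (C u) * (1 + Q X * Q d)) * q_a'
          - ((1 + Q X * Q d) * (1 + Q X * Q d') * Q (h 0 0)) * q_γ00
          - ((1 + Q X * Q d) * (1 + Q X * Q d') * Q (γ 0 1)) * q_c
      -- constant coefficient gives u = 1
      have hXE : (X : Polynomial F) ∣ ((1 + X * d') + γ 0 1 * X * c * ((1 + X * d) * (1 + X * d'))
          - C u * (1 + X * d)) := dvd_trans (dvd_pow_self X hn0) hEdvd
      have hcoeff : ((1 + X * d') + γ 0 1 * X * c * ((1 + X * d) * (1 + X * d'))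
          - C u * (1 + X * d)).coeff 0 = 1 - u := by
        simp [coeff_one, mul_coeff_zero, coeff_X_zero]
      have hu1 : u = 1 := by
        have := Polynomial.X_dvd_iff.1 hXE
        rw [hcoeff, sub_eq_zero] at this
        exact this.symm
      rw [hu1, Polynomial.C_1, one_mul] at hEdvd
      rw [hu1, Polynomial.C_1] at q_row1
      rw [_root_.map_one, one_mul] at q_row1
      -- c = c'
      have hsub1 : (X : Polynomial F) ^ n ∣ X * (c - c') := by
        apply ofQ
        simp only [_root_.map_mul, _root_.map_sub]
        linear_combination q_row1 - Q (h 0 0) * q_γ10 - Q (h 1 0) * q_γ11 - q_c + q_c'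
      have hdvd_cc : (X : Polynomial F) ^ (n - 1) ∣ (c - c') := by
        rw [hpow] at hsub1
        exact (mul_dvd_mul_iff_left (Polynomial.X_ne_zero (R := F))).1 hsub1
      have hcc : c = c' := by
        by_contra hne
        have hne' : c - c' ≠ 0 := sub_ne_zero.2 hne
        have hle := Polynomial.degree_le_of_dvd hdvd_cc hne'
        rw [degree_X_pow] at hle
        have hlt : (c - c').degree < ((n - 1 : ℕ) : WithBot ℕ) :=
          lt_of_le_of_lt (degree_sub_le _ _) (max_lt hcdeg hc'deg)
        exact absurd (lt_of_le_of_lt hle hlt) (lt_irrefl _)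
      refine ⟨hcc, -(γ 0 1 * ((1 + X * d) * (1 + X * d'))), ?_⟩
      have hXE2 : (X : Polynomial F) ^ n ∣ X * (d' - d - c * -(γ 0 1 * ((1 + X * d) * (1 + X * d')))) := by
        have hring : X * (d' - d - c * -(γ 0 1 * ((1 + X * d) * (1 + X * d')))) =
            (1 + X * d') + γ 0 1 * X * c * ((1 + X * d) * (1 + X * d')) - (1 + X * d) := by
          ring
        rw [hring]
        exact hEdvd
      rw [hpow] at hXE2
      exact (mul_dvd_mul_iff_left (Polynomial.X_ne_zero (R := F))).1 hXE2
    · rintro ⟨hce, e, he⟩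
      subst hce
      set φ := algebraMap (Polynomial F) (RatFunc F)
      obtain ⟨hdet, hb, hc10, hd11, ha⟩ := hs
      obtain ⟨hdet', hb', hc10', hd11', ha'⟩ := hs'
      obtain ⟨f, hf⟩ := he
      have hpow : (X : Polynomial F) ^ n = X * X ^ (n - 1) := by
        nth_rewrite 1 [← Nat.sub_add_cancel hn]
        rw [pow_succ']
      have hdet2 : h 0 0 * h 1 1 - h 0 1 * h 1 0 = 1 := by rw [← Matrix.det_fin_two]; exact hdet
      have hdet2' : h' 0 0 * h' 1 1 - h' 0 1 * h' 1 0 = 1 := by rw [← Matrix.det_fin_two]; exact hdet'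
      set g00 : Polynomial F := h' 0 0 * h 1 1 + (h' 0 0 * e - h' 0 1) * h 1 0 with hg00
      set g01 : Polynomial F := -(h' 0 0 * h 0 1) + (-(h' 0 0 * e) + h' 0 1) * h 0 0 with hg01
      set g10 : Polynomial F := h' 1 0 * h 1 1 + (h' 1 0 * e - h' 1 1) * h 1 0 with hg10
      set g11 : Polynomial F := -(h' 1 0 * h 0 1) + (-(h' 1 0 * e) + h' 1 1) * h 0 0 with hg11
      set γ : Matrix (Fin 2) (Fin 2) (Polynomial F) := !![g00, g01; g10, g11] with hγ
      -- quotient ring setup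
      set Q := Ideal.Quotient.mk (Ideal.span {(X : Polynomial F) ^ n}) with hQ
      have toQ : ∀ z w : Polynomial F, (X : Polynomial F) ^ n ∣ (z - w) → Q z = Q w := by
        intro z w hzw
        rw [← sub_eq_zero, ← _root_.map_sub]
        exact (Ideal.Quotient.eq_zero_iff_dvd _ _).2 hzw
      have ofQ : ∀ z : Polynomial F, Q z = 0 → (X : Polynomial F) ^ n ∣ z := fun z hz =>
        (Ideal.Quotient.eq_zero_iff_dvd _ _).1 hz
      have q_xy : Q X * Q (X ^ (n - 1)) = 0 := by
        rw [← _root_.map_mul, ← hpow]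
        exact (Ideal.Quotient.eq_zero_iff_dvd _ _).2 dvd_rfl
      have q_b : Q (h 0 1) = 0 := by
        have := toQ _ 0 (by simpa using hb); simpa using this
      have q_b' : Q (h' 0 1) = 0 := by
        have := toQ _ 0 (by simpa using hb'); simpa using this
      have q_c : Q (h 1 0) = Q X * Q c := by
        have := toQ _ _ hc10; rwa [_root_.map_mul] at this
      have q_c' : Q (h' 1 0) = Q X * Q c := by
        have := toQ _ _ hc10'; rwa [_root_.map_mul] at this
      have q_d : Q (h 1 1) = 1 + Q X * Q d := by
        have := toQ _ _ hd11; rwa [_root_.map_add, _root_.map_one, _root_.map_mul] at this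
      have q_d' : Q (h' 1 1) = 1 + Q X * Q d' := by
        have := toQ _ _ hd11'; rwa [_root_.map_add, _root_.map_one, _root_.map_mul] at this
      have q_a : Q (h 0 0) * (1 + Q X * Q d) = 1 := by
        have := toQ _ _ ha; simpa only [_root_.map_mul, _root_.map_add, _root_.map_one] using this
      have q_a' : Q (h' 0 0) * (1 + Q X * Q d') = 1 := by
        have := toQ _ _ ha'; simpa only [_root_.map_mul, _root_.map_add, _root_.map_one] using this
      have q_f : Q d' - Q d - Q c * Q e = Q (X ^ (n - 1)) * Q f := by
        have := congrArg Q hf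
        rwa [_root_.map_sub, _root_.map_sub, _root_.map_mul, _root_.map_mul] at this
      refine ⟨γ, ⟨?_, ?_, ?_, ?_⟩, 1, one_ne_zero, ?_⟩
      · rw [hγ, Matrix.det_fin_two_of, hg00, hg01, hg10, hg11]
        linear_combination (h 0 0 * h 1 1 - h 0 1 * h 1 0) * hdet2' + hdet2
      · -- X^n ∣ γ 1 0
        apply ofQ
        show Q g10 = 0
        rw [hg10, _root_.map_add, _root_.map_mul, _root_.map_mul, _root_.map_sub, _root_.map_mul]
        linear_combination Q (h 1 1) * q_c' + (Q X * Q c) * q_d + (Q (h' 1 0) * Q e - Q (h' 1 1)) * q_c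
          + (Q X * Q c * Q e) * q_c' - (Q X * Q c) * q_d'
          - (Q X * Q X * Q c) * q_f - (Q X * Q c * Q f) * q_xy
      · -- X^n ∣ γ 0 0 - 1
        apply ofQ
        have : Q (g00 - 1) = Q g00 - 1 := by rw [_root_.map_sub, _root_.map_one]
        rw [show γ 0 0 - 1 = g00 - 1 from rfl, this]
        rw [hg00, _root_.map_add, _root_.map_mul, _root_.map_mul, _root_.map_sub, _root_.map_mul]
        rw [sub_eq_zero]
        linear_combination Q (h' 0 0) * q_d + (Q (h' 0 0) * Q e - Q (h' 0 1)) * q_c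
          - (Q X * Q c) * q_b' + q_a' - (Q (h' 0 0) * Q X) * q_f - (Q (h' 0 0) * Q f) * q_xy
      · -- X^n ∣ γ 1 1 - 1
        apply ofQ
        have : Q (g11 - 1) = Q g11 - 1 := by rw [_root_.map_sub, _root_.map_one]
        rw [show γ 1 1 - 1 = g11 - 1 from rfl, this]
        rw [hg11, _root_.map_add, _root_.map_neg, _root_.map_mul, _root_.map_mul, _root_.map_add, _root_.map_neg, _root_.map_mul]
        rw [sub_eq_zero]
        linear_combination -(Q (h' 1 0)) * q_b + Q (h 0 0) * q_d'
          - (Q (h 0 0) * Q e) * q_c' + q_a + (Q (h 0 0) * Q X) * q_f + (Q (h 0 0) * Q f) * q_xy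
      · -- the vector equation
        have col0 : g00 * h 0 0 + g01 * h 1 0 = h' 0 0 := by
          rw [hg00, hg01]; linear_combination h' 0 0 * hdet2
        have col1 : g10 * h 0 0 + g11 * h 1 0 = h' 1 0 := by
          rw [hg10, hg11]; linear_combination h' 1 0 * hdet2
        rw [one_smul, map_mulVec10 φ h, map_mulVec10 φ h', mulVec_two]
        have t0 : (γ.map φ) 0 0 = φ g00 := rfl
        have t1 : (γ.map φ) 0 1 = φ g01 := rfl
        have t2 : (γ.map φ) 1 0 = φ g10 := rfl
        have t3 : (γ.map φ) 1 1 = φ g11 := rfl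
        simp only [Matrix.cons_val_zero, Matrix.cons_val_one, Matrix.head_cons]
        rw [t0, t1, t2, t3, ← _root_.map_mul, ← _root_.map_mul, ← _root_.map_add, col0,
          ← _root_.map_mul, ← _root_.map_mul, ← _root_.map_add, col1]
  · rintro v hv ⟨δ, ⟨hδdet, hδ10, hδ00, hδ11⟩, μ, hμ, hδv⟩
    set φ := algebraMap (Polynomial F) (RatFunc F)
    have hpow : (X : Polynomial F) ^ n = X * X ^ (n - 1) := by
      nth_rewrite 1 [← Nat.sub_add_cancel hn]
      rw [pow_succ']
    obtain ⟨c₁, hc₁⟩ := hδ10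
    obtain ⟨d₁, hd₁⟩ := hδ00
    obtain ⟨d₂, hd₂⟩ := hδ11
    -- inverse of δ 1 1 mod X^n
    have hcop : IsCoprime ((X : Polynomial F) ^ n) (δ 1 1) := by
      apply IsCoprime.pow_left
      refine ⟨-d₂, 1, ?_⟩
      linear_combination hd₂
    obtain ⟨y, a, hya⟩ := hcop
    set m : Polynomial F := a * δ 0 1 with hm
    set cb : Polynomial F := -c₁ with hcb
    set db : Polynomial F := d₁ + cb * m with hdb
    set c : Polynomial F := cb %ₘ X ^ (n - 1) with hc
    set d : Polynomial F := db %ₘ X ^ (n - 1) with hd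
    have hqc : c + X ^ (n - 1) * (cb /ₘ X ^ (n - 1)) = cb := modByMonic_add_div _ _
    have hqd : d + X ^ (n - 1) * (db /ₘ X ^ (n - 1)) = db := modByMonic_add_div _ _
    set qc := cb /ₘ X ^ (n - 1)
    set qd := db /ₘ X ^ (n - 1)
    have hδdet2 : δ 0 0 * δ 1 1 - δ 0 1 * δ 1 0 = 1 := by
      rw [← Matrix.det_fin_two]; exact hδdet
    refine ⟨c, d, ?_, ?_, ?_⟩
    · have := degree_modByMonic_lt cb (monic_X_pow (R := F) (n - 1))
      rwa [degree_X_pow] at this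
    · have := degree_modByMonic_lt db (monic_X_pow (R := F) (n - 1))
      rwa [degree_X_pow] at this
    set h : Matrix (Fin 2) (Fin 2) (Polynomial F) :=
      !![δ 1 1, δ 1 1 * m - δ 0 1; -(δ 1 0), -(δ 1 0) * m + δ 0 0] with hh
    have e00 : h 0 0 = δ 1 1 := rfl
    have e01 : h 0 1 = δ 1 1 * m - δ 0 1 := rfl
    have e10 : h 1 0 = -(δ 1 0) := rfl
    have e11 : h 1 1 = -(δ 1 0) * m + δ 0 0 := rfl
    have E2 : h 0 1 = X ^ n * (-(δ 0 1 * y)) := by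
      rw [e01]
      linear_combination δ 0 1 * hya
    have E3 : h 1 0 - X * c = X ^ n * qc := by
      rw [e10]
      linear_combination -hc₁ - X * hqc - qc * hpow
    have E4 : h 1 1 - (1 + X * d) = X ^ n * qd := by
      rw [e11]
      linear_combination -m * hc₁ + hd₁ - X * hqd - qd * hpow
    have E5 : h 0 0 * (1 + X * d) - 1 = X ^ n * ((-(δ 0 1 * y)) * (-(δ 1 0)) - qd * δ 1 1) := by
      rw [e00]
      linear_combination -δ 1 1 * E4 - δ 1 0 * E2 + hδdet2 + δ 1 1 * e11 + δ 1 0 * e01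
    refine ⟨h, ⟨?_, ⟨_, E2⟩, ⟨_, E3⟩, ⟨_, E4⟩, ⟨_, E5⟩⟩, 1, ⟨Matrix.det_one, by simp, by simp, by simp⟩,
      μ, hμ, ?_⟩
    · rw [hh, Matrix.det_fin_two_of]
      linear_combination hδdet2
    · -- (1.map φ).mulVec v = μ • ((h.map φ).mulVec ![1,0])
      have h1 : ((1 : Matrix (Fin 2) (Fin 2) (Polynomial F)).map φ) = 1 :=
        Matrix.map_one φ (map_zero φ) (map_one φ)
      rw [h1, Matrix.one_mulVec]
      have hv' : v = ((δ.adjugate).map φ).mulVec ![μ, 0] := by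
        rw [← hδv, Matrix.mulVec_mulVec, ← Matrix.map_mul, Matrix.adjugate_mul, hδdet, one_smul,
          Matrix.map_one φ (map_zero φ) (map_one φ), Matrix.one_mulVec]
      rw [hv', Matrix.adjugate_fin_two]
      funext i
      fin_cases i <;>
        simp [Matrix.mulVec, dotProduct, Fin.sum_univ_two, Matrix.map_apply, hh, mul_comm]
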